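/- Let v ∈ F^{N+1} be nonzero. Then H(v)² = 4·Q(v)^{q+1} if and only if there exist u, w ∈ 𝔽_q^{N+1}, linearly independent over F, with v ∈ span_F{u, w}, such that the number of one-dimensional 𝔽_q-subspaces ⟨(s,t)⟩ of 𝔽_q² with Q(su + tw) = 0 is equal to 1 or to q+1. (That is, H² − 4Q^{q+1} = 0 is an equation for the quasi-Hermitian variety of PG(N,q²) obtained as the union of the extended lines of the Baer subgeometry meeting the subquadric in exactly one or exactly q+1 points.) -/

import Mathlib

/-- The quadratic polynomial `Q(x) = ∑_{i,j} c_{ij} x_i x_j` with coefficient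
matrix `c`. -/
def Qpoly {F : Type*} [Field F] {m : ℕ} (c : Fin m → Fin m → F)
    (x : Fin m → F) : F :=
  ∑ i, ∑ j, c i j * x i * x j

/-- The polar form `b(u,v) = Q(u+v) - Q(u) - Q(v)` of `Q`. -/
def polarB {F : Type*} [Field F] {m : ℕ} (c : Fin m → Fin m → F)
    (x y : Fin m → F) : F :=
  Qpoly c (x + y) - Qpoly c x - Qpoly c y

/-- The Hermitian form `H(v) = b(v, φ(v))` where `φ` is the coordinatewise `q`-th
power map. -/
def Hgen (q : ℕ) {F : Type*} [Field F] {m : ℕ} (c : Fin m → Fin m → F)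
    (x : Fin m → F) : F :=
  polarB c x fun i => x i ^ q

/-- The number of one-dimensional `𝔽_q`-subspaces `⟨(s,t)⟩` of `𝔽_q²` with
`Q(s·u + t·w) = 0`. -/
noncomputable def tangentCountGen (q : ℕ) {F : Type*} [Field F] {m : ℕ}
    (c : Fin m → Fin m → F) (u w : Fin m → F) : ℕ :=
  Set.ncard {L : Set (F × F) | ∃ s t : F, s ^ q = s ∧ t ^ q = t ∧ (s, t) ≠ (0, 0) ∧
    Qpoly c (fun i => s * u i + t * w i) = 0 ∧
    L = {p : F × F | ∃ e : F, e ^ q = e ∧ p = (e * s, e * t)}}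

/-! ### Auxiliary algebraic lemmas -/

section Algebra

variable {F : Type*} [Field F] {m : ℕ}

lemma qc_expand (c : Fin m → Fin m → F) (a b : F) (u w : Fin m → F) :
    Qpoly c (fun i => a * u i + b * w i)
      = a^2 * Qpoly c u + a * b * polarB c u w + b^2 * Qpoly c w := by
  unfold polarB Qpoly
  simp only [Pi.add_apply, Finset.mul_sum, mul_sub, ← Finset.sum_sub_distrib,
    ← Finset.sum_add_distrib]
  refine Finset.sum_congr rfl fun i _ => ?_
  refine Finset.sum_congr rfl fun j _ => ?_
  ring

lemma Qpoly_smul (c : Fin m → Fin m → F) (a : F) (u : Fin m → F) :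
    Qpoly c (fun i => a * u i) = a^2 * Qpoly c u := by
  unfold Qpoly
  simp only [Finset.mul_sum]
  refine Finset.sum_congr rfl fun i _ => Finset.sum_congr rfl fun j _ => by ring

lemma polarB_comb (c : Fin m → Fin m → F) (a b a' b' : F) (u w : Fin m → F) :
    polarB c (fun i => a * u i + b * w i) (fun i => a' * u i + b' * w i)
      = 2*a*a' * Qpoly c u + (a*b' + a'*b) * polarB c u w + 2*b*b' * Qpoly c w := by
  have h : (fun i => a * u i + b * w i) + (fun i => a' * u i + b' * w i)
      = fun i => (a+a') * u i + (b+b') * w i := by funext i; simp [Pi.add_apply]; ring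
  rw [polarB, h, qc_expand, qc_expand, qc_expand]
  ring

lemma D_transform (c : Fin m → Fin m → F) (a b a' b' : F) (u w : Fin m → F) :
    (polarB c (fun i => a * u i + b * w i) (fun i => a' * u i + b' * w i))^2
      - 4 * Qpoly c (fun i => a * u i + b * w i) * Qpoly c (fun i => a' * u i + b' * w i)
      = (a*b' - a'*b)^2 * ((polarB c u w)^2 - 4 * Qpoly c u * Qpoly c w) := by
  rw [polarB_comb, qc_expand, qc_expand]
  ring

lemma polarB_expand (c : Fin m → Fin m → F) (u w : Fin m → F) :
    polarB c u w = ∑ j, (∑ i, (c i j + c j i) * u i) * w j := by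
  have l1 : polarB c u w = ∑ i, ∑ j, (c i j * u i * w j + c i j * w i * u j) := by
    unfold polarB Qpoly
    simp only [Pi.add_apply, ← Finset.sum_sub_distrib]
    refine Finset.sum_congr rfl fun i _ => ?_
    refine Finset.sum_congr rfl fun j _ => ?_
    ring
  rw [l1, Finset.sum_comm]
  simp only [Finset.sum_mul, add_mul, Finset.sum_add_distrib]
  congr 1
  rw [Finset.sum_comm]
  exact Finset.sum_congr rfl fun i _ => Finset.sum_congr rfl fun j _ => by ring

/-- The `q`-power map as a ring hom, given additivity. -/
def powHom (q : ℕ) (hq0 : q ≠ 0) (hadd : ∀ x y : F, (x + y) ^ q = x ^ q + y ^ q) :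
    F →+* F where
  toFun := (· ^ q)
  map_one' := one_pow q
  map_mul' := fun x y => mul_pow x y q
  map_zero' := zero_pow hq0
  map_add' := hadd

lemma Qpoly_pow (q : ℕ) (hq0 : q ≠ 0) (hadd : ∀ x y : F, (x + y) ^ q = x ^ q + y ^ q)
    (c : Fin m → Fin m → F) (hc : ∀ i j, c i j ^ q = c i j) (v : Fin m → F) :
    Qpoly c (fun i => v i ^ q) = Qpoly c v ^ q := by
  have : Qpoly c v ^ q = powHom q hq0 hadd (Qpoly c v) := rfl
  rw [this]
  unfold Qpoly
  rw [map_sum]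
  refine Finset.sum_congr rfl fun i _ => ?_
  rw [map_sum]
  refine Finset.sum_congr rfl fun j _ => ?_
  show c i j * v i ^ q * v j ^ q = (c i j * v i * v j) ^ q
  rw [mul_pow, mul_pow, hc]

lemma fixed_sum (q : ℕ) (hq0 : q ≠ 0) (hadd : ∀ x y : F, (x + y) ^ q = x ^ q + y ^ q)
    {ι : Type*} (s : Finset ι) (f : ι → F) (hf : ∀ i ∈ s, f i ^ q = f i) :
    (∑ i ∈ s, f i) ^ q = ∑ i ∈ s, f i := by
  have : (∑ i ∈ s, f i) ^ q = powHom q hq0 hadd (∑ i ∈ s, f i) := rfl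
  rw [this, map_sum]
  exact Finset.sum_congr rfl fun i hi => hf i hi

lemma li_pair {u w : Fin m → F}
    (h : ∀ a b : F, (∀ i, a * u i + b * w i = 0) → a = 0 ∧ b = 0) :
    LinearIndependent F ![u, w] := by
  rw [LinearIndependent.pair_iff]
  intro s t hst
  refine h s t fun i => ?_
  have := congrFun hst i
  simpa using this

lemma li_of_not_smul {u w : Fin m → F} (hu0 : u ≠ 0)
    (h : ∀ a : F, a • u ≠ w) : LinearIndependent F ![u, w] := by
  refine li_pair fun a b hab => ?_
  by_cases hb : b = 0
  · subst hb
    constructor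
    · by_contra ha
      apply hu0
      funext i
      have h2 : a * u i = 0 := by linear_combination hab i
      show u i = 0
      exact (mul_eq_zero.mp h2).resolve_left ha
    · rfl
  · exfalso
    apply h (-a / b)
    funext i
    show -a / b * u i = w i
    rw [div_mul_eq_mul_div, div_eq_iff hb]
    linear_combination -(hab i)

end Algebra

/-! ### Cardinality of the Baer subfield -/

open Polynomial in
lemma card_fixed (q p k : ℕ) (hp : p.Prime) (hk : 0 < k) (hqpk : q = p ^ k)
    (F : Type*) [Field F] [Fintype F] [CharP F p] (hF : Fintype.card F = q ^ 2) :
    Set.ncard {x : F | x ^ q = x} = q := by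
  classical
  haveI : Fact p.Prime := ⟨hp⟩
  have hq1 : 1 < q := by
    have := hp.two_le
    calc 1 < p := this
    _ ≤ p ^ k := Nat.le_self_pow hk.ne' p
    _ = q := hqpk.symm
  have hqF : (q : F) = 0 := by
    rw [CharP.cast_eq_zero_iff F p q]
    exact hqpk ▸ dvd_pow_self p hk.ne'
  set g : F[X] := X ^ q - X with hg
  have hgne : g ≠ 0 := FiniteField.X_pow_card_sub_X_ne_zero F hq1
  have hsep : g.Separable := by
    rw [separable_def]
    have hder : derivative g = -1 := by
      simp [hg, derivative_X_pow, hqF]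
    rw [hder]
    exact isCoprime_one_right.neg_right
  set h : F[X] := X ^ (q ^ 2) - X with hh
  have hq2 : 1 < q ^ 2 := by nlinarith
  have hhne : h ≠ 0 := FiniteField.X_pow_card_sub_X_ne_zero F hq2
  have hdvd : g ∣ h := by
    refine ⟨g ^ (q - 1) + 1, ?_⟩
    have hfr : g ^ q = X ^ (q ^ 2) - X ^ q := by
      have h1 : (X ^ q - X : F[X]) ^ q = (X ^ q) ^ q - X ^ q := by
        conv_lhs => rw [hqpk]
        rw [sub_pow_char_pow]
        rw [← hqpk]
      rw [hg, h1, ← pow_mul, ← pow_two]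
    have hgq : g * g ^ (q - 1) = g ^ q := by
      rw [← pow_succ']
      congr 1
      omega
    rw [mul_add, mul_one, hgq, hfr, hh]
    ring
  have hroots_h : h.roots = Finset.univ.val := by
    have := FiniteField.roots_X_pow_card_sub_X F
    rwa [hF] at this
  have hsplits_h : h.Splits := by
    rw [splits_iff_card_roots, hroots_h]
    have : Multiset.card Finset.univ.val = Fintype.card F := rfl
    rw [this, hF, hh, FiniteField.X_pow_card_sub_X_natDegree_eq F hq2]
  have hsplits_g : g.Splits :=
    Polynomial.Splits.of_dvd hsplits_h hhne hdvd
  have hcard : Multiset.card g.roots = q := by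
    rw [splits_iff_card_roots.mp hsplits_g, hg,
      FiniteField.X_pow_card_sub_X_natDegree_eq F hq1]
  have hnodup : g.roots.Nodup := nodup_roots hsep
  have hset : {x : F | x ^ q = x} = ↑g.roots.toFinset := by
    ext x
    simp only [Set.mem_setOf_eq, Finset.coe_sort_coe, Finset.mem_coe,
      Multiset.mem_toFinset, mem_roots hgne, IsRoot.def, hg, eval_sub, eval_pow, eval_X,
      sub_eq_zero]
    rw [mem_roots (hg ▸ hgne), IsRoot.def, eval_sub, eval_pow, eval_X, sub_eq_zero]
  rw [hset, Set.ncard_coe_finset, Multiset.toFinset_card_of_nodup hnodup, hcard]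

/-! ### Lines of the Baer subplane -/

def lineK (q : ℕ) {F : Type*} [Field F] (s t : F) : Set (F × F) :=
  {p : F × F | ∃ e : F, e ^ q = e ∧ p = (e * s, e * t)}

section Lines

variable {F : Type*} [Field F]

lemma self_mem_lineK (q : ℕ) (s t : F) : (s, t) ∈ lineK q s t :=
  ⟨1, one_pow q, by rw [one_mul, one_mul]⟩

lemma lineK_scale (q : ℕ) {e : F} (he : e ^ q = e) (he0 : e ≠ 0) (s t : F) :
    lineK q (e * s) (e * t) = lineK q s t := by
  ext p
  constructor
  · rintro ⟨e', he', rfl⟩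
    exact ⟨e' * e, by rw [mul_pow, he', he], by rw [Prod.mk.injEq]; constructor <;> ring⟩
  · rintro ⟨e', he', rfl⟩
    refine ⟨e' * e⁻¹, by rw [mul_pow, he', inv_pow, he], ?_⟩
    rw [Prod.mk.injEq]
    constructor <;> field_simp <;> ring

lemma exists_of_lineK_eq {q : ℕ} {s t s' t' : F} (h : lineK q s t = lineK q s' t') :
    ∃ e : F, e ^ q = e ∧ s' = e * s ∧ t' = e * t := by
  have hm := self_mem_lineK q s' t'
  rw [← h] at hm
  obtain ⟨e, he, hp⟩ := hm
  rw [Prod.mk.injEq] at hp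
  exact ⟨e, he, hp.1, hp.2⟩

end Lines
section Count

variable {F : Type*} [Field F]

lemma count_main (q : ℕ) (hq3 : 3 ≤ q) (hoddq : Odd q) [Fintype F]
    (hadd : ∀ x y : F, (x + y) ^ q = x ^ q + y ^ q) (h2 : (2 : F) ≠ 0)
    (hK : Set.ncard {x : F | x ^ q = x} = q)
    (A B C : F) (hA : A ^ q = A) (hB : B ^ q = B) (hC : C ^ q = C) :
    (Set.ncard {L : Set (F × F) | ∃ s t : F, s ^ q = s ∧ t ^ q = t ∧ (s, t) ≠ (0, 0) ∧
        s ^ 2 * A + s * t * B + t ^ 2 * C = 0 ∧ L = lineK q s t} = 1 ∨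
      Set.ncard {L : Set (F × F) | ∃ s t : F, s ^ q = s ∧ t ^ q = t ∧ (s, t) ≠ (0, 0) ∧
        s ^ 2 * A + s * t * B + t ^ 2 * C = 0 ∧ L = lineK q s t} = q + 1)
      ↔ B ^ 2 - 4 * A * C = 0 := by
  have hq0 : q ≠ 0 := by omega
  have h1q : (1 : F) ^ q = 1 := one_pow q
  have h0q : (0 : F) ^ q = 0 := zero_pow hq0
  have h2q : (2 : F) ^ q = 2 := by
    have := hadd 1 1
    rw [one_pow] at this
    norm_num at this
    exact this
  have hnegq : ∀ x : F, x ^ q = x → (-x) ^ q = -x := fun x hx => by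
    rw [hoddq.neg_pow, hx]
  set S : Set (Set (F × F)) := {L : Set (F × F) | ∃ s t : F, s ^ q = s ∧ t ^ q = t ∧
      (s, t) ≠ (0, 0) ∧ s ^ 2 * A + s * t * B + t ^ 2 * C = 0 ∧ L = lineK q s t} with hSdef

  -- auxiliary: with A ≠ 0, any solution has t ≠ 0
  have tne : A ≠ 0 → ∀ s t : F, (s, t) ≠ (0, 0) → s ^ 2 * A + s * t * B + t ^ 2 * C = 0 →
      t ≠ 0 := by
    intro hA0 s t hne heq ht0
    subst ht0
    have hs2 : s ^ 2 * A = 0 := by linear_combination heq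
    rcases mul_eq_zero.mp hs2 with h' | h'
    · exact hne (by rw [pow_eq_zero_iff (two_ne_zero) |>.mp h'])
    · exact hA0 h'
  constructor
  · -- count = 1 or q+1  →  discriminant zero
    intro hcnt
    by_contra hD
    have hcard2 : Set.ncard S = 0 ∨ Set.ncard S = 2 := by
      by_cases hA0 : A = 0
      · -- A = 0, B ≠ 0 : two lines
        subst hA0
        have hB0 : B ≠ 0 := fun h => hD (by rw [h]; ring)
        have hSeq : S = {lineK q 1 0, lineK q (-C) B} := by
          ext L
          constructor
          · rintro ⟨s, t, hs, ht, hne, heq, rfl⟩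
            by_cases ht0 : t = 0
            · left
              have hs0 : s ≠ 0 := fun h => hne (by rw [h, ht0])
              calc lineK q s t = lineK q (s * 1) (s * 0) := by rw [mul_one, mul_zero, ht0]
                _ = lineK q 1 0 := lineK_scale q hs hs0 1 0
            · right
              have hkey : s * B + t * C = 0 := by
                have h' : t * (s * B + t * C) = 0 := by linear_combination heq
                rcases mul_eq_zero.mp h' with h'' | h''
                · exact absurd h'' ht0
                · exact h''
              have he : (t / B) ^ q = t / B := by rw [div_pow, ht, hB]
              have he0 : t / B ≠ 0 := div_ne_zero ht0 hB0
              show lineK q s t = lineK q (-C) B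
              have e1 : s = (t / B) * -C := by
                rw [div_mul_eq_mul_div, eq_div_iff hB0]
                linear_combination hkey
              have e2 : t = (t / B) * B := (div_mul_cancel₀ t hB0).symm
              calc lineK q s t = lineK q ((t / B) * -C) ((t / B) * B) := by
                    rw [← e1, ← e2]
                _ = lineK q (-C) B := lineK_scale q he he0 _ _
          · intro hL
            rcases Set.mem_insert_iff.mp hL with rfl | hL
            · exact ⟨1, 0, h1q, h0q, fun h => one_ne_zero (congrArg Prod.fst h),
                by ring, rfl⟩
            · rw [Set.mem_singleton_iff] at hL
              exact ⟨-C, B, hnegq C hC, hB, fun h => hB0 (congrArg Prod.snd h),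
                by ring, hL⟩
        right
        rw [hSeq]
        refine Set.ncard_pair fun hEq => ?_
        obtain ⟨e, _, h1, h2⟩ := exists_of_lineK_eq hEq
        rw [mul_zero] at h2
        rw [mul_one] at h1
        exact hB0 h2
      · -- A ≠ 0
        by_cases hsq : ∃ δ : F, δ ^ q = δ ∧ δ ^ 2 = B ^ 2 - 4 * A * C
        · -- two lines
          obtain ⟨δ, hδq, hδ2⟩ := hsq
          have hδ0 : δ ≠ 0 := fun h => hD (by rw [h] at hδ2; linear_combination -hδ2)
          have h2A : (2 : F) * A ≠ 0 := mul_ne_zero h2 hA0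
          have hSeq : S = {lineK q (-B + δ) (2 * A), lineK q (-B - δ) (2 * A)} := by
            ext L
            constructor
            · rintro ⟨s, t, hs, ht, hne, heq, rfl⟩
              have ht0 : t ≠ 0 := tne hA0 s t hne heq
              have he : (t / (2 * A)) ^ q = t / (2 * A) := by
                rw [div_pow, ht, mul_pow, h2q, hA]
              have he0 : t / (2 * A) ≠ 0 := div_ne_zero ht0 h2A
              have hfac : (2 * A * s + (B - δ) * t) * (2 * A * s + (B + δ) * t) = 0 := by
                linear_combination 4 * A * heq - t ^ 2 * hδ2
              rcases mul_eq_zero.mp hfac with h' | h'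
              · left
                have e1 : s = (t / (2 * A)) * (-B + δ) := by
                  rw [div_mul_eq_mul_div, eq_div_iff h2A]
                  linear_combination h'
                have e2 : t = (t / (2 * A)) * (2 * A) := (div_mul_cancel₀ t h2A).symm
                calc lineK q s t
                    = lineK q ((t / (2 * A)) * (-B + δ)) ((t / (2 * A)) * (2 * A)) := by
                      rw [← e1, ← e2]
                  _ = lineK q (-B + δ) (2 * A) := lineK_scale q he he0 _ _
              · right
                have e1 : s = (t / (2 * A)) * (-B - δ) := by
                  rw [div_mul_eq_mul_div, eq_div_iff h2A]
                  linear_combination h'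
                have e2 : t = (t / (2 * A)) * (2 * A) := (div_mul_cancel₀ t h2A).symm
                calc lineK q s t
                    = lineK q ((t / (2 * A)) * (-B - δ)) ((t / (2 * A)) * (2 * A)) := by
                      rw [← e1, ← e2]
                  _ = lineK q (-B - δ) (2 * A) := lineK_scale q he he0 _ _
            · intro hL
              rcases Set.mem_insert_iff.mp hL with rfl | hL
              · refine ⟨-B + δ, 2 * A, ?_, by rw [mul_pow, h2q, hA],
                  fun h => h2A (congrArg Prod.snd h), by linear_combination A * hδ2, rfl⟩
                rw [hadd, hnegq B hB, hδq]
              · rw [Set.mem_singleton_iff] at hL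
                refine ⟨-B - δ, 2 * A, ?_, by rw [mul_pow, h2q, hA],
                  fun h => h2A (congrArg Prod.snd h), by linear_combination A * hδ2, hL⟩
                have : -B - δ = -B + -δ := by ring
                rw [this, hadd, hnegq B hB, hnegq δ hδq]
          right
          rw [hSeq]
          refine Set.ncard_pair fun hEq => ?_
          obtain ⟨e, _, hh1, hh2⟩ := exists_of_lineK_eq hEq
          have he1 : e = 1 := by
            have hh2' : e * (2 * A) = 1 * (2 * A) := by rw [← hh2, one_mul]
            exact mul_right_cancel₀ h2A hh2'
          rw [he1, one_mul] at hh1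
          have hδz : δ = 0 := by
            have h2δ : 2 * δ = 0 := by linear_combination -hh1
            rcases mul_eq_zero.mp h2δ with h | h
            · exact absurd h h2
            · exact h
          exact hδ0 hδz
        · -- no solutions
          left
          have hSeq : S = ∅ := by
            rw [Set.eq_empty_iff_forall_notMem]
            rintro L ⟨s, t, hs, ht, hne, heq, rfl⟩
            have ht0 : t ≠ 0 := tne hA0 s t hne heq
            refine hsq ⟨(2 * A * s + B * t) / t, ?_, ?_⟩
            · rw [div_pow, ht, hadd, mul_pow, mul_pow, mul_pow, h2q, hA, hs, hB, ht]
            · have hmain : (2 * A * s + B * t) ^ 2 = (B ^ 2 - 4 * A * C) * t ^ 2 := by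
                linear_combination 4 * A * heq
              rw [div_pow, hmain, mul_div_assoc, div_self (pow_ne_zero 2 ht0), mul_one]
          rw [hSeq, Set.ncard_empty]
    rcases hcard2 with h | h <;> rcases hcnt with h' | h' <;> omega
  · -- discriminant zero → count = 1 or q+1
    intro hD
    by_cases hA0 : A = 0
    · subst hA0
      have hB0 : B = 0 := by
        have : B ^ 2 = 0 := by linear_combination hD
        exact pow_eq_zero_iff two_ne_zero |>.mp this
      subst hB0
      by_cases hC0 : C = 0
      · subst hC0
        right
        have hSeq : S = ((fun x : F => lineK q 1 x) '' {x : F | x ^ q = x}) ∪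
            {lineK q 0 1} := by
          ext L
          constructor
          · rintro ⟨s, t, hs, ht, hne, _, rfl⟩
            by_cases hs0 : s = 0
            · right
              rw [Set.mem_singleton_iff]
              subst hs0
              have ht0 : t ≠ 0 := fun h => hne (by rw [h])
              calc lineK q 0 t = lineK q (t * 0) (t * 1) := by rw [mul_zero, mul_one]
                _ = lineK q 0 1 := lineK_scale q ht ht0 0 1
            · left
              refine ⟨t / s, by rw [Set.mem_setOf_eq, div_pow, hs, ht], ?_⟩
              show lineK q 1 (t / s) = lineK q s t
              calc lineK q 1 (t / s) = lineK q (s * 1) (s * (t / s)) :=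
                    (lineK_scale q hs hs0 1 (t / s)).symm
                _ = lineK q s t := by rw [mul_one, mul_div_cancel₀ t hs0]
          · intro hL
            rcases hL with ⟨x, hx, rfl⟩ | hL
            · exact ⟨1, x, h1q, hx, fun h => one_ne_zero (congrArg Prod.fst h),
                by ring, rfl⟩
            · rw [Set.mem_singleton_iff] at hL
              exact ⟨0, 1, h0q, h1q, fun h => one_ne_zero (congrArg Prod.snd h),
                by ring, hL⟩
        have hinj : Set.InjOn (fun x : F => lineK q 1 x) {x : F | x ^ q = x} := by
          intro x _ x' _ hEq
          have hEq' : lineK q 1 x = lineK q 1 x' := hEq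
          obtain ⟨e, _, h1, h2⟩ := exists_of_lineK_eq hEq'
          rw [mul_one] at h1
          subst h1
          rw [one_mul] at h2
          exact h2.symm
        have hdisj : Disjoint ((fun x : F => lineK q 1 x) '' {x : F | x ^ q = x})
            {lineK q 0 1} := by
          rw [Set.disjoint_singleton_right]
          rintro ⟨x, _, hEq⟩
          have hEq' : lineK q 1 x = lineK q 0 1 := hEq
          obtain ⟨e, _, h1, h2⟩ := exists_of_lineK_eq hEq'
          rw [mul_one] at h1
          subst h1
          rw [zero_mul] at h2
          exact one_ne_zero h2
        rw [hSeq, Set.ncard_union_eq hdisj (Set.toFinite _) (Set.toFinite _),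
          Set.ncard_image_of_injOn hinj, hK, Set.ncard_singleton]
      · -- C ≠ 0 : single line
        left
        have hSeq : S = {lineK q 1 0} := by
          ext L
          constructor
          · rintro ⟨s, t, hs, ht, hne, heq, rfl⟩
            rw [Set.mem_singleton_iff]
            have ht0 : t = 0 := by
              have h' : t ^ 2 * C = 0 := by linear_combination heq
              rcases mul_eq_zero.mp h' with h'' | h''
              · exact pow_eq_zero_iff two_ne_zero |>.mp h''
              · exact absurd h'' hC0
            subst ht0
            have hs0 : s ≠ 0 := fun h => hne (by rw [h])
            calc lineK q s 0 = lineK q (s * 1) (s * 0) := by rw [mul_one, mul_zero]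
              _ = lineK q 1 0 := lineK_scale q hs hs0 1 0
          · intro hL
            rw [Set.mem_singleton_iff] at hL
            exact ⟨1, 0, h1q, h0q, fun h => one_ne_zero (congrArg Prod.fst h),
              by ring, hL⟩
        rw [hSeq, Set.ncard_singleton]
    · -- A ≠ 0 : single line
      left
      have h2A : (2 : F) * A ≠ 0 := mul_ne_zero h2 hA0
      have hSeq : S = {lineK q (-B) (2 * A)} := by
        ext L
        constructor
        · rintro ⟨s, t, hs, ht, hne, heq, rfl⟩
          rw [Set.mem_singleton_iff]
          have ht0 : t ≠ 0 := tne hA0 s t hne heq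
          have hkey : 2 * A * s + B * t = 0 := by
            have hsq' : (2 * A * s + B * t) ^ 2 = 0 := by
              linear_combination 4 * A * heq + t ^ 2 * hD
            exact pow_eq_zero_iff two_ne_zero |>.mp hsq'
          have he : (t / (2 * A)) ^ q = t / (2 * A) := by
            rw [div_pow, ht, mul_pow, h2q, hA]
          have he0 : t / (2 * A) ≠ 0 := div_ne_zero ht0 h2A
          have e1 : s = (t / (2 * A)) * (-B) := by
            rw [div_mul_eq_mul_div, eq_div_iff h2A]
            linear_combination hkey
          have e2 : t = (t / (2 * A)) * (2 * A) := (div_mul_cancel₀ t h2A).symm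
          calc lineK q s t = lineK q ((t / (2 * A)) * (-B)) ((t / (2 * A)) * (2 * A)) := by
                rw [← e1, ← e2]
            _ = lineK q (-B) (2 * A) := lineK_scale q he he0 _ _
        · intro hL
          rw [Set.mem_singleton_iff] at hL
          exact ⟨-B, 2 * A, hnegq B hB, by rw [mul_pow, h2q, hA],
            fun h => h2A (congrArg Prod.snd h), by linear_combination -A * hD, hL⟩
      rw [hSeq, Set.ncard_singleton]

end Count
lemma exists_w_perp (q : ℕ) (hq0 : q ≠ 0) (hodd : Odd q) {F : Type*} [Field F]
    (hadd : ∀ x y : F, (x + y) ^ q = x ^ q + y ^ q)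
    {N : ℕ} (hN : 3 ≤ N) (c : Fin (N + 1) → Fin (N + 1) → F)
    (hc : ∀ i j, c i j ^ q = c i j)
    (u : Fin (N + 1) → F) (hu : ∀ i, u i ^ q = u i) (hu0 : u ≠ 0) :
    ∃ w : Fin (N + 1) → F, (∀ i, w i ^ q = w i) ∧ w ≠ 0 ∧ polarB c u w = 0 ∧
      ∀ a : F, a • u ≠ w := by
  classical
  set d : Fin (N + 1) → F := fun j => ∑ i, (c i j + c j i) * u i with hd
  have hdq : ∀ j, d j ^ q = d j := by
    intro j
    refine fixed_sum q hq0 hadd _ _ fun i _ => ?_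
    rw [mul_pow, hadd, hc, hc, hu]
  have hpol : ∀ w : Fin (N + 1) → F, polarB c u w = ∑ j, d j * w j := by
    intro w
    rw [polarB_expand]
  obtain ⟨i0, hi0⟩ : ∃ i, u i ≠ 0 := Function.ne_iff.mp hu0
  by_cases hd0 : ∀ j, d j = 0
  · -- b(u, ·) ≡ 0 : take a basis vector independent from u
    have hne01 : ∃ j1 : Fin (N + 1), j1 ≠ i0 := by
      refine ⟨⟨if i0.val = 0 then 1 else 0, by split_ifs <;> omega⟩, ?_⟩
      rw [Fin.ne_iff_vne]
      simp only []
      split_ifs with h <;> omega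
    obtain ⟨j1, hj1⟩ := hne01
    refine ⟨fun i => if i = j1 then 1 else 0, fun i => ?_, ?_, ?_, ?_⟩
    · dsimp only
      split_ifs
      · exact one_pow q
      · exact zero_pow hq0
    · intro h
      have := congrFun h j1
      simp at this
    · rw [hpol]
      refine Finset.sum_eq_zero fun j _ => ?_
      rw [hd0 j, zero_mul]
    · intro a h
      have h1 := congrFun h i0
      have h2 := congrFun h j1
      simp only [Pi.smul_apply, smul_eq_mul] at h1 h2
      rw [if_neg hj1.symm] at h1
      rw [if_true] at h2
      have ha : a = 0 := by
        rcases mul_eq_zero.mp h1 with h' | h'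
        · exact h'
        · exact absurd h' hi0
      rw [ha, zero_mul] at h2
      exact one_ne_zero h2.symm
  · push_neg at hd0
    obtain ⟨j0, hj0⟩ := hd0
    -- two candidate indices different from j0 and each other
    have hexj : ∃ j1 j2 : Fin (N + 1), j1 ≠ j2 ∧ j1 ≠ j0 ∧ j2 ≠ j0 := by
      refine ⟨⟨if j0.val = 0 then 1 else 0, by split_ifs <;> omega⟩,
        ⟨if j0.val ≤ 1 then 2 else 1, by split_ifs <;> omega⟩, ?_, ?_, ?_⟩ <;>
        rw [Fin.ne_iff_vne] <;> simp only [] <;> split_ifs <;> omega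
    obtain ⟨j1, j2, hj12, hj10, hj20⟩ := hexj
    -- the candidate vector associated to an index jx ≠ j0
    set W : Fin (N + 1) → Fin (N + 1) → F :=
      fun jx i => if i = jx then d j0 else if i = j0 then -(d jx) else 0 with hW
    have hWq : ∀ jx i, W jx i ^ q = W jx i := by
      intro jx i
      rw [hW]
      simp only []
      split_ifs
      · exact hdq j0
      · rw [hodd.neg_pow, hdq]
      · exact zero_pow hq0
    have hWne : ∀ jx, W jx ≠ 0 := by
      intro jx h
      have := congrFun h jx
      simp only [hW, if_pos rfl, Pi.zero_apply] at this
      exact hj0 this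
    have hWpol : ∀ jx, jx ≠ j0 → polarB c u (W jx) = 0 := by
      intro jx hjx
      rw [hpol]
      have : ∀ j, d j * W jx j =
          (if j = jx then d j * d j0 else 0) + (if j = j0 then d j * -(d jx) else 0) := by
        intro j
        rw [hW]
        by_cases h1 : j = jx
        · subst h1
          simp [hjx]
        · by_cases h2 : j = j0
          · subst h2
            simp [h1]
          · simp [h1, h2]
      rw [Finset.sum_congr rfl fun j _ => this j, Finset.sum_add_distrib,
        Finset.sum_ite_eq' Finset.univ jx (fun j => d j * d j0),
        Finset.sum_ite_eq' Finset.univ j0 (fun j => d j * -(d jx))]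
      simp only [Finset.mem_univ, if_pos]
      ring
    -- pick a good one among j1 j2
    by_cases hgood : ∀ a : F, a • u ≠ W j1
    · exact ⟨W j1, hWq j1, hWne j1, hWpol j1 hj10, hgood⟩
    · push_neg at hgood
      obtain ⟨a1, ha1⟩ := hgood
      refine ⟨W j2, hWq j2, hWne j2, hWpol j2 hj20, ?_⟩
      intro a2 ha2
      have h11 := congrFun ha1 j1
      have h12 := congrFun ha1 j2
      have h22 := congrFun ha2 j2
      simp only [Pi.smul_apply, smul_eq_mul, hW] at h11 h12 h22
      rw [if_true] at h11
      rw [if_neg hj12.symm, if_neg hj20] at h12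
      rw [if_true] at h22
      -- h11 : a1 * u j1 = d j0 ; h12 : a1 * u j2 = 0 ; h22 : a2 * u j2 = d j0
      have ha1ne : a1 ≠ 0 := by
        intro h
        rw [h, zero_mul] at h11
        exact hj0 h11.symm
      have hu2 : u j2 = 0 := by
        rcases mul_eq_zero.mp h12 with h | h
        · exact absurd h ha1ne
        · exact h
      rw [hu2, mul_zero] at h22
      exact hj0 h22.symm

set_option maxHeartbeats 1000000 in
set_option synthInstance.maxHeartbeats 400000 in
open MvPolynomial in
lemma exists_w_CW (q p k : ℕ) (hp : p.Prime) (hk : 0 < k) (hqpk : q = p ^ k)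
    (hodd : Odd q) {F : Type*} [Field F] [Fintype F] [CharP F p]
    {N : ℕ} (hN : 3 ≤ N)
    (c : Fin (N + 1) → Fin (N + 1) → F) (hc : ∀ i j, c i j ^ q = c i j)
    (u : Fin (N + 1) → F) (hu : ∀ i, u i ^ q = u i) :
    ∃ w : Fin (N + 1) → F, (∀ i, w i ^ q = w i) ∧ w ≠ 0 ∧ Qpoly c w = 0 ∧
      polarB c u w = 0 := by
  classical
  haveI : Fact p.Prime := ⟨hp⟩
  have hq0 : q ≠ 0 := by
    subst hqpk; exact (pow_pos hp.pos k).ne'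
  have hadd : ∀ x y : F, (x + y) ^ q = x ^ q + y ^ q := fun x y => by
    rw [hqpk]; exact add_pow_char_pow x y p k
  -- the subfield of q-th power fixed points
  let K : Subfield F :=
    { carrier := {x : F | x ^ q = x}
      mul_mem' := fun {x y} hx hy => by
        simp only [Set.mem_setOf_eq] at *
        rw [mul_pow, hx, hy]
      one_mem' := one_pow q
      add_mem' := fun {x y} hx hy => by
        simp only [Set.mem_setOf_eq] at *
        rw [hadd, hx, hy]
      zero_mem' := zero_pow hq0
      neg_mem' := fun {x} hx => by
        simp only [Set.mem_setOf_eq] at *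
        rw [hodd.neg_pow, hx]
      inv_mem' := fun x hx => by
        simp only [Set.mem_setOf_eq] at *
        rw [inv_pow, hx] }
  haveI : Fintype K := Fintype.ofFinite K
  haveI : CharP K p := (K.subtype).charP Subtype.coe_injective p
  let cK : Fin (N + 1) → Fin (N + 1) → K := fun i j => ⟨c i j, hc i j⟩
  let uK : Fin (N + 1) → K := fun i => ⟨u i, hu i⟩
  let f₁ : MvPolynomial (Fin (N + 1)) K := ∑ i, ∑ j, C (cK i j) * X i * X j
  let f₂ : MvPolynomial (Fin (N + 1)) K := ∑ j, C (∑ i, (cK i j + cK j i) * uK i) * X j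
  have hdeg1 : f₁.totalDegree ≤ 2 := by
    refine (totalDegree_finset_sum _ _).trans (Finset.sup_le fun i _ => ?_)
    refine (totalDegree_finset_sum _ _).trans (Finset.sup_le fun j _ => ?_)
    calc (C (cK i j) * X i * X j).totalDegree
        ≤ (C (cK i j) * X i).totalDegree + (X j : MvPolynomial (Fin (N + 1)) K).totalDegree :=
          totalDegree_mul _ _
      _ ≤ (C (cK i j)).totalDegree + (X i : MvPolynomial (Fin (N + 1)) K).totalDegree
            + (X j : MvPolynomial (Fin (N + 1)) K).totalDegree :=
          add_le_add_left (totalDegree_mul _ _) _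
      _ = 2 := by rw [totalDegree_C, totalDegree_X, totalDegree_X]
  have hdeg2 : f₂.totalDegree ≤ 1 := by
    refine (totalDegree_finset_sum _ _).trans (Finset.sup_le fun j _ => ?_)
    calc (C (∑ i, (cK i j + cK j i) * uK i) * X j).totalDegree
        ≤ (C (∑ i, (cK i j + cK j i) * uK i)).totalDegree
            + (X j : MvPolynomial (Fin (N + 1)) K).totalDegree := totalDegree_mul _ _
      _ = 1 := by rw [totalDegree_C, totalDegree_X]
  have hlt : f₁.totalDegree + f₂.totalDegree < Fintype.card (Fin (N + 1)) := by
    rw [Fintype.card_fin]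
    omega
  have hdvd := char_dvd_card_solutions_of_add_lt p hlt
  have heval1 : ∀ x : Fin (N + 1) → K, eval x f₁ = ∑ i, ∑ j, cK i j * x i * x j := by
    intro x
    simp [f₁, map_sum, eval_C, eval_X]
  have heval2 : ∀ x : Fin (N + 1) → K,
      eval x f₂ = ∑ j, (∑ i, (cK i j + cK j i) * uK i) * x j := by
    intro x
    simp [f₂, map_sum, eval_C, eval_X]
  have hzero : eval (0 : Fin (N + 1) → K) f₁ = 0 ∧ eval (0 : Fin (N + 1) → K) f₂ = 0 := by
    rw [heval1, heval2]
    simp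
  have hcardpos : 0 < Fintype.card {x : Fin (N + 1) → K // eval x f₁ = 0 ∧ eval x f₂ = 0} :=
    Fintype.card_pos_iff.mpr ⟨⟨0, hzero⟩⟩
  have h1lt : 1 < Fintype.card {x : Fin (N + 1) → K // eval x f₁ = 0 ∧ eval x f₂ = 0} := by
    obtain ⟨mm, hm⟩ := hdvd
    have hm1 : 1 ≤ mm := by
      rcases Nat.eq_zero_or_pos mm with h | h
      · rw [h, mul_zero] at hm; omega
      · exact h
    calc 1 < p := hp.one_lt
      _ = p * 1 := (mul_one p).symm
      _ ≤ p * mm := Nat.mul_le_mul_left p hm1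
      _ = _ := hm.symm
  obtain ⟨x, hx⟩ := Fintype.exists_ne_of_one_lt_card h1lt ⟨0, hzero⟩
  refine ⟨fun i => (x.1 i : F), fun i => (x.1 i).2, ?_, ?_, ?_⟩
  · intro h
    apply hx
    apply Subtype.ext
    funext i
    have : ((x.1 i : F)) = 0 := congrFun h i
    exact Subtype.ext this
  · have h := x.2.1
    rw [heval1] at h
    have hco := congrArg (K.subtype) h
    rw [map_sum] at hco
    simp only [map_sum, map_mul, map_zero] at hco
    unfold Qpoly
    exact hco
  · have h := x.2.2
    rw [heval2] at h
    have hco := congrArg (K.subtype) h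
    rw [map_sum] at hco
    simp only [map_sum, map_mul, map_add, map_zero] at hco
    rw [polarB_expand]
    exact hco

lemma tangent_eq (q : ℕ) {F : Type*} [Field F] {m : ℕ} (c : Fin m → Fin m → F)
    (u w : Fin m → F) :
    tangentCountGen q c u w = Set.ncard {L : Set (F × F) | ∃ s t : F,
      s ^ q = s ∧ t ^ q = t ∧ (s, t) ≠ (0, 0) ∧
      s ^ 2 * Qpoly c u + s * t * polarB c u w + t ^ 2 * Qpoly c w = 0 ∧
      L = lineK q s t} := by
  unfold tangentCountGen
  congr 1
  ext L
  constructor <;> rintro ⟨s, t, hs, ht, hne, heq, hL⟩ <;>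
    refine ⟨s, t, hs, ht, hne, ?_, hL⟩
  · rw [qc_expand] at heq
    exact heq
  · rw [qc_expand]
    exact heq

/-- For a nondegenerate quadric with `𝔽_q`-coefficients in `PG(N,q²)`, `N ≥ 3`:
a nonzero `v` satisfies `H(v)² = 4Q(v)^{q+1}` iff `v` lies on an extended line of the
Baer subgeometry meeting the subquadric in exactly one or exactly `q+1` points.
This gives an equation for the quasi-Hermitian variety of Pavese's construction. -/
theorem stmt7 (q : ℕ) (hq : ∃ p k : ℕ, p.Prime ∧ 0 < k ∧ q = p ^ k) (hodd : Odd q)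
    (F : Type*) [Field F] [Fintype F] (hF : Fintype.card F = q ^ 2)
    (N : ℕ) (hN : 3 ≤ N)
    (c : Fin (N + 1) → Fin (N + 1) → F) (hc : ∀ i j, c i j ^ q = c i j)
    (hnd : (Matrix.of fun i j => c i j + c j i).det ≠ 0)
    (v : Fin (N + 1) → F) (hv : v ≠ 0) :
    Hgen q c v ^ 2 = 4 * Qpoly c v ^ (q + 1) ↔
      ∃ u w : Fin (N + 1) → F,
        (∀ i, u i ^ q = u i) ∧ (∀ i, w i ^ q = w i) ∧ u ≠ 0 ∧ w ≠ 0 ∧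
        LinearIndependent F ![u, w] ∧
        v ∈ Submodule.span F {u, w} ∧
        (tangentCountGen q c u w = 1 ∨ tangentCountGen q c u w = q + 1) := by
  classical
  obtain ⟨p, k, hp, hk, hqpk⟩ := hq
  haveI hfact : Fact p.Prime := ⟨hp⟩
  haveI hcharF : CharP F p := by
    obtain ⟨n, hpn, hcard⟩ := FiniteField.card F (ringChar F)
    have hdvd : ringChar F ∣ q ^ 2 := by
      rw [← hF, hcard]
      exact dvd_pow_self _ n.pos.ne'
    have hdp : ringChar F ∣ p := by
      have h1 : ringChar F ∣ (p ^ k) ^ 2 := hqpk ▸ hdvd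
      rw [← pow_mul] at h1
      exact hpn.dvd_of_dvd_pow h1
    have hring : ringChar F = p := (Nat.prime_dvd_prime_iff_eq hpn hp).mp hdp
    rw [← hring]
    exact ringChar.charP F
  have hq0 : q ≠ 0 := by
    subst hqpk; exact (pow_pos hp.pos k).ne'
  have hp2 : p ≠ 2 := by
    intro h
    have heven : Even q := by
      rw [hqpk, h]
      exact Nat.even_pow.mpr ⟨even_two, hk.ne'⟩
    exact (Nat.not_odd_iff_even.mpr heven) hodd
  have hq3 : 3 ≤ q := by
    have hp3 : 3 ≤ p := by have := hp.two_le; omega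
    calc 3 ≤ p := hp3
    _ ≤ p ^ k := Nat.le_self_pow hk.ne' p
    _ = q := hqpk.symm
  have h2ne : (2 : F) ≠ 0 := by
    intro h
    have h2' : ((2 : ℕ) : F) = 0 := by exact_mod_cast h
    have hdvd : p ∣ 2 := (CharP.cast_eq_zero_iff F p 2).mp h2'
    exact hp2 ((Nat.prime_dvd_prime_iff_eq hp Nat.prime_two).mp hdvd)
  have hadd : ∀ x y : F, (x + y) ^ q = x ^ q + y ^ q := fun x y => by
    rw [hqpk]; exact add_pow_char_pow x y p k
  have hKcard : Set.ncard {x : F | x ^ q = x} = q := card_fixed q p k hp hk hqpk F hF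
  have hfix2 : ∀ x : F, (x ^ q) ^ q = x := by
    intro x
    rw [← pow_mul]
    have hqq : q * q = Fintype.card F := by rw [hF]; ring
    rw [hqq, FiniteField.pow_card]
  -- counting bridge for Baer vectors
  have hbridge : ∀ u w : Fin (N + 1) → F, (∀ i, u i ^ q = u i) → (∀ i, w i ^ q = w i) →
      ((tangentCountGen q c u w = 1 ∨ tangentCountGen q c u w = q + 1) ↔
        polarB c u w ^ 2 - 4 * Qpoly c u * Qpoly c w = 0) := by
    intro u w hu hw
    have hfixQ : ∀ z : Fin (N + 1) → F, (∀ i, z i ^ q = z i) →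
        Qpoly c z ^ q = Qpoly c z := by
      intro z hz
      rw [← Qpoly_pow q hq0 hadd c hc z]
      congr 1
      funext i
      rw [hz i]
    have hA : Qpoly c u ^ q = Qpoly c u := hfixQ u hu
    have hC : Qpoly c w ^ q = Qpoly c w := hfixQ w hw
    have hB : polarB c u w ^ q = polarB c u w := by
      have hsum : Qpoly c (u + w) ^ q = Qpoly c (u + w) := hfixQ (u + w) fun i => by
        simp only [Pi.add_apply]
        rw [hadd, hu, hw]
      have hsub : ∀ x y : F, (x - y) ^ q = x ^ q - y ^ q := by
        intro x y
        have h1 := hadd (x - y) y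
        rw [sub_add_cancel] at h1
        linear_combination -h1
      rw [polarB, hsub, hsub, hsum, hA, hC]
    rw [tangent_eq q c u w]
    exact count_main q hq3 hodd hadd h2ne hKcard (Qpoly c u) (polarB c u w)
      (Qpoly c w) hA hB hC
  have hQφ : Qpoly c (fun i => v i ^ q) = Qpoly c v ^ q := Qpoly_pow q hq0 hadd c hc v
  have keyiff : (Hgen q c v ^ 2 = 4 * Qpoly c v ^ (q + 1)) ↔
      polarB c v (fun i => v i ^ q) ^ 2
        - 4 * Qpoly c v * Qpoly c (fun i => v i ^ q) = 0 := by
    rw [Hgen, hQφ, pow_succ]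
    constructor <;> intro h <;> linear_combination h
  rw [keyiff]
  constructor
  · intro hD0
    obtain ⟨lam, hlam⟩ : ∃ lam : F, lam ^ q ≠ lam := by
      by_contra hall
      push_neg at hall
      have huniv : {x : F | x ^ q = x} = Set.univ := Set.eq_univ_iff_forall.mpr hall
      rw [huniv, Set.ncard_univ, Nat.card_eq_fintype_card, hF] at hKcard
      nlinarith [hq3]
    obtain ⟨i0, hi0⟩ : ∃ i, v i ≠ 0 := Function.ne_iff.mp hv
    by_cases hdep : ∃ μ : F, ∀ i, v i ^ q = μ * v i
    · -- `v` is projectively a point of the Baer subgeometry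
      obtain ⟨μ, hμ⟩ := hdep
      have hμ1 : μ ^ q * μ = 1 := by
        have h1 : μ ^ q * μ * v i0 = 1 * v i0 := by
          have h2 := hfix2 (v i0)
          rw [hμ i0, mul_pow, hμ i0] at h2
          linear_combination h2
        exact mul_right_cancel₀ hi0 h1
      obtain ⟨β, hβ⟩ : ∃ β : F, β + β ^ q * μ ≠ 0 := by
        by_cases hμm : μ = -1
        · exact ⟨lam, fun h => hlam (by rw [hμm] at h; linear_combination -h)⟩
        · exact ⟨1, by
            rw [one_pow, one_mul]
            exact fun h => hμm (by linear_combination h)⟩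
      set ρ := β + β ^ q * μ with hρ
      have hρq : ρ ^ q * μ = ρ := by
        have h1 : ρ ^ q = β ^ q + β * μ ^ q := by
          rw [hρ, hadd, mul_pow, hfix2 β]
        rw [h1, hρ]
        linear_combination β * hμ1
      set u : Fin (N + 1) → F := fun i => ρ * v i with hudef
      have hu : ∀ i, u i ^ q = u i := by
        intro i
        show (ρ * v i) ^ q = ρ * v i
        rw [mul_pow, hμ i, ← mul_assoc, hρq]
      have hu0 : u ≠ 0 := by
        intro h
        have h1 := congrFun h i0
        rcases mul_eq_zero.mp h1 with h' | h'
        · exact hβ h'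
        · exact hi0 h'
      have hvspan : ∀ w : Fin (N + 1) → F, v ∈ Submodule.span F {u, w} := by
        intro w
        rw [Submodule.mem_span_pair]
        refine ⟨ρ⁻¹, 0, ?_⟩
        funext i
        show ρ⁻¹ * u i + 0 * w i = v i
        rw [zero_mul, add_zero]
        show ρ⁻¹ * (ρ * v i) = v i
        rw [← mul_assoc, inv_mul_cancel₀ hβ, one_mul]
      by_cases hQu : Qpoly c u = 0
      · obtain ⟨w, hw, hw0, hbw, hns⟩ := exists_w_perp q hq0 hodd hadd hN c hc u hu hu0
        refine ⟨u, w, hu, hw, hu0, hw0, li_of_not_smul hu0 hns, hvspan w, ?_⟩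
        rw [hbridge u w hu hw, hbw, hQu]
        ring
      · obtain ⟨w, hw, hw0, hQw, hbw⟩ := exists_w_CW q p k hp hk hqpk hodd hN c hc u hu
        have hns : ∀ a : F, a • u ≠ w := by
          intro a h
          have h1 : Qpoly c w = a ^ 2 * Qpoly c u := by
            rw [← h]
            exact Qpoly_smul c a u
          rw [hQw] at h1
          rcases mul_eq_zero.mp h1.symm with h' | h'
          · have ha : a = 0 := pow_eq_zero_iff two_ne_zero |>.mp h'
            apply hw0
            rw [← h, ha, zero_smul]
          · exact hQu h'
        refine ⟨u, w, hu, hw, hu0, hw0, li_of_not_smul hu0 hns, hvspan w, ?_⟩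
        rw [hbridge u w hu hw, hbw, hQw]
        ring
    · -- `v` and `φ(v)` are independent
      push_neg at hdep
      have hindvφ : ∀ a b : F, (∀ i, a * v i + b * v i ^ q = 0) → a = 0 ∧ b = 0 := by
        intro a b h
        by_cases hb : b = 0
        · subst hb
          refine ⟨?_, rfl⟩
          by_contra ha
          apply hi0
          have h2 : a * v i0 = 0 := by linear_combination h i0
          exact (mul_eq_zero.mp h2).resolve_left ha
        · exfalso
          obtain ⟨i, hi⟩ := hdep (-a / b)
          apply hi
          rw [div_mul_eq_mul_div, eq_div_iff hb]
          linear_combination h i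
      set u : Fin (N + 1) → F := fun i => v i + v i ^ q with hudef
      set w : Fin (N + 1) → F := fun i => lam * v i + lam ^ q * v i ^ q with hwdef
      have hu : ∀ i, u i ^ q = u i := fun i => by
        have h1 : u i = v i + v i ^ q := rfl
        rw [h1, hadd, hfix2]
        ring
      have hw : ∀ i, w i ^ q = w i := fun i => by
        show (lam * v i + lam ^ q * v i ^ q) ^ q = _
        rw [hadd, mul_pow, mul_pow, hfix2 lam, hfix2 (v i)]
        show _ = lam * v i + lam ^ q * v i ^ q
        ring
      have hu0 : u ≠ 0 := by
        intro h
        have h1 := hindvφ 1 1 fun i => by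
          have h2 := congrFun h i
          show 1 * v i + 1 * v i ^ q = 0
          rw [one_mul, one_mul]
          exact h2
        exact one_ne_zero h1.1
      have hw0 : w ≠ 0 := by
        intro h
        have h1 := hindvφ lam (lam ^ q) fun i => congrFun h i
        exact hlam (by rw [h1.2, h1.1])
      have hli : LinearIndependent F ![u, w] := by
        refine li_pair fun a b hab => ?_
        have h2 := hindvφ (a + b * lam) (a + b * lam ^ q) fun i => by
          have h3 := hab i
          rw [hudef, hwdef] at h3
          simp only [] at h3
          linear_combination h3
        have hb : b = 0 := by
          have h3 : b * (lam - lam ^ q) = 0 := by linear_combination h2.1 - h2.2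
          rcases mul_eq_zero.mp h3 with h' | h'
          · exact h'
          · exact absurd (by linear_combination -h' : lam ^ q = lam) hlam
        refine ⟨?_, hb⟩
        have h4 := h2.1
        rw [hb] at h4
        linear_combination h4
      have hspan : v ∈ Submodule.span F {u, w} := by
        rw [Submodule.mem_span_pair]
        have hden : lam ^ q - lam ≠ 0 := sub_ne_zero.mpr hlam
        refine ⟨lam ^ q / (lam ^ q - lam), -1 / (lam ^ q - lam), ?_⟩
        funext i
        show lam ^ q / (lam ^ q - lam) * u i + -1 / (lam ^ q - lam) * w i = v i
        rw [hudef, hwdef]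
        simp only []
        field_simp
        ring
      refine ⟨u, w, hu, hw, hu0, hw0, hli, hspan, ?_⟩
      rw [hbridge u w hu hw]
      have hDt := D_transform c 1 1 lam (lam ^ q) v (fun i => v i ^ q)
      have hueq : (fun i => 1 * v i + 1 * (fun i => v i ^ q) i) = u := by
        funext i
        show 1 * v i + 1 * v i ^ q = u i
        rw [hudef]
        ring
      have hweq : (fun i => lam * v i + lam ^ q * (fun i => v i ^ q) i) = w := by
        funext i
        show lam * v i + lam ^ q * v i ^ q = w i
        rw [hwdef]
      rw [hueq, hweq] at hDt
      rw [hDt, hD0, mul_zero]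
  · rintro ⟨u, w, hu, hw, hu0, hw0, hli, hspan, hcnt⟩
    have hDuw : polarB c u w ^ 2 - 4 * Qpoly c u * Qpoly c w = 0 :=
      (hbridge u w hu hw).mp hcnt
    obtain ⟨a, b, hab⟩ := Submodule.mem_span_pair.mp hspan
    have hveq : v = fun i => a * u i + b * w i := by
      funext i
      have h1 := congrFun hab i
      simp only [Pi.add_apply, Pi.smul_apply, smul_eq_mul] at h1
      exact h1.symm
    have hφeq : (fun i => v i ^ q) = fun i => a ^ q * u i + b ^ q * w i := by
      funext i
      rw [hveq]
      show (a * u i + b * w i) ^ q = _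
      rw [hadd, mul_pow, mul_pow, hu i, hw i]
    rw [hφeq, hveq, D_transform c a b (a ^ q) (b ^ q) u w, hDuw, mul_zero]
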